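/- Let 𝒜 be a unital C*-algebra, let a, b ∈ 𝒜 be positive elements, and let t ∈ (1/2, 1). Then ‖b^(1-t) a^(2t-1) b^(1-t) + a^(1-t) b^(2t-1) a^(1-t)‖ ≤ 2^(max{4t − 3, 0}) · ‖a + b‖. -/

import Mathlib

open scoped NNReal

namespace AuxFT
variable {A : Type*} [CStarAlgebra A] [PartialOrder A] [StarOrderedRing A]

lemma one_nonneg' : (0 : A) ≤ 1 := by simpa using star_mul_self_nonneg (1 : A)

lemma rpow_sa (a : A) (r : ℝ) : IsSelfAdjoint (a ^ r) :=
  IsSelfAdjoint.of_nonneg CFC.rpow_nonneg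

lemma star_rpow (a : A) (r : ℝ) : star (a ^ r) = a ^ r := rpow_sa a r

lemma rpow_add_nonneg (a : A) (ha : 0 ≤ a) {x y : ℝ} (hx : 0 ≤ x) (hy : 0 ≤ y) :
    a ^ (x + y) = a ^ x * a ^ y := by
  rcases eq_or_lt_of_le hx with rfl|hx'
  · rw [zero_add, CFC.rpow_zero a ha, one_mul]
  rcases eq_or_lt_of_le hy with rfl|hy'
  · rw [add_zero, CFC.rpow_zero a ha, mul_one]
  have hxy : x + y ≠ 0 := by positivity
  simp only [CFC.rpow_def]
  rw [← cfc_mul _ _ a (NNReal.continuousOn_rpow_const (.inr hx))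
    (NNReal.continuousOn_rpow_const (.inr hy))]
  exact cfc_congr fun z _ => NNReal.rpow_add' hxy z

end AuxFT

namespace AuxFT

section Invertible

variable {A : Type*} [CStarAlgebra A] [PartialOrder A] [StarOrderedRing A] [Nontrivial A]
variable {a b : A}

lemma sandwich_one (hb : 0 ≤ b) (hbu : 0 ∉ spectrum ℝ≥0 b) (r : ℝ) :
    b ^ (-(r/2)) * b ^ r * b ^ (-(r/2)) = 1 := by
  have h1 : b ^ (-(r/2)) * b ^ r = b ^ (r/2) := by
    rw [← CFC.rpow_add ((spectrum.zero_notMem_iff ℝ≥0).mp hbu)]; congr 1; ring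
  rw [h1, CFC.rpow_mul_rpow_neg _ (((spectrum.zero_notMem_iff ℝ≥0).mp hbu).isStrictlyPositive hb)]

lemma P_to_norm (ha : 0 ≤ a) (hb : 0 ≤ b) (hbu : 0 ∉ spectrum ℝ≥0 b)
    {r : ℝ} (hr : 0 ≤ r) (hP : a ^ r ≤ b ^ r) :
    ‖a ^ (r/2) * b ^ (-(r/2))‖ ≤ 1 := by
  have hconj := star_left_conjugate_le_conjugate hP (b ^ (-(r/2)))
  rw [star_rpow] at hconj
  have hz1 : b ^ (-(r/2)) * a ^ r * b ^ (-(r/2)) ≤ 1 := by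
    rw [← sandwich_one hb hbu r]; exact hconj
  have hz0 : 0 ≤ b ^ (-(r/2)) * a ^ r * b ^ (-(r/2)) := by
    have := star_left_conjugate_nonneg (CFC.rpow_nonneg (a := a) (y := r)) (b ^ (-(r/2)))
    rwa [star_rpow] at this
  have hn : ‖b ^ (-(r/2)) * a ^ r * b ^ (-(r/2))‖ ≤ 1 := by
    calc ‖b ^ (-(r/2)) * a ^ r * b ^ (-(r/2))‖ ≤ ‖(1:A)‖ :=
          CStarAlgebra.norm_le_norm_of_nonneg_of_le hz0 hz1
    _ = 1 := norm_one
  have key : star (a ^ (r/2) * b ^ (-(r/2))) * (a ^ (r/2) * b ^ (-(r/2)))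
      = b ^ (-(r/2)) * a ^ r * b ^ (-(r/2)) := by
    rw [star_mul, star_rpow, star_rpow]
    have : a ^ (r/2) * a ^ (r/2) = a ^ r := by
      rw [← rpow_add_nonneg a ha (by positivity) (by positivity)]; congr 1; ring
    simp only [mul_assoc, ← this]
  have hsq : ‖a ^ (r/2) * b ^ (-(r/2))‖ ^ 2 ≤ 1 := by
    rw [sq, ← CStarRing.norm_star_mul_self, key]; exact hn
  nlinarith [norm_nonneg (a ^ (r/2) * b ^ (-(r/2)))]

lemma norm_to_P (ha : 0 ≤ a) (hb : 0 ≤ b) (hbu : 0 ∉ spectrum ℝ≥0 b)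
    {r : ℝ} (hr : 0 ≤ r)
    (hz : ‖b ^ (-(r/2)) * a ^ r * b ^ (-(r/2))‖ ≤ 1) : a ^ r ≤ b ^ r := by
  have hz0 : 0 ≤ b ^ (-(r/2)) * a ^ r * b ^ (-(r/2)) := by
    have := star_left_conjugate_nonneg (CFC.rpow_nonneg (a := a) (y := r)) (b ^ (-(r/2)))
    rwa [star_rpow] at this
  have hz1 : b ^ (-(r/2)) * a ^ r * b ^ (-(r/2)) ≤ 1 := by
    calc b ^ (-(r/2)) * a ^ r * b ^ (-(r/2))
        ≤ algebraMap ℝ A ‖b ^ (-(r/2)) * a ^ r * b ^ (-(r/2))‖ :=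
          IsSelfAdjoint.le_algebraMap_norm_self (.of_nonneg hz0)
    _ ≤ 1 := by
        rw [← map_one (algebraMap ℝ A), ← sub_nonneg, ← map_sub,
          Algebra.algebraMap_eq_smul_one]
        exact smul_nonneg (by linarith) one_nonneg'
  have hconj := star_left_conjugate_le_conjugate hz1 (b ^ (r/2))
  rw [star_rpow, mul_one] at hconj
  have hbr : b ^ (r/2) * b ^ (r/2) = b ^ r := by
    rw [← rpow_add_nonneg b hb (by positivity) (by positivity)]; congr 1; ring
  have h1 : b ^ (r/2) * b ^ (-(r/2)) = 1 := CFC.rpow_mul_rpow_neg _ (((spectrum.zero_notMem_iff ℝ≥0).mp hbu).isStrictlyPositive hb)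
  have h2 : b ^ (-(r/2)) * b ^ (r/2) = 1 := CFC.rpow_neg_mul_rpow _ (((spectrum.zero_notMem_iff ℝ≥0).mp hbu).isStrictlyPositive hb)
  have hL : b ^ (r/2) * (b ^ (-(r/2)) * a ^ r * b ^ (-(r/2))) * b ^ (r/2) = a ^ r := by
    calc b ^ (r/2) * (b ^ (-(r/2)) * a ^ r * b ^ (-(r/2))) * b ^ (r/2)
        = (b ^ (r/2) * b ^ (-(r/2))) * a ^ r * (b ^ (-(r/2)) * b ^ (r/2)) := by
          simp only [mul_assoc]
    _ = a ^ r := by rw [h1, h2, one_mul, mul_one]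
  rw [hL, hbr] at hconj
  exact hconj

lemma midpoint (ha : 0 ≤ a) (hb : 0 ≤ b) (hbu : 0 ∉ spectrum ℝ≥0 b)
    {r s : ℝ} (hr : 0 ≤ r) (hs : 0 ≤ s)
    (hPr : a ^ r ≤ b ^ r) (hPs : a ^ s ≤ b ^ s) :
    a ^ ((r + s)/2) ≤ b ^ ((r + s)/2) := by
  set m : ℝ := (r + s)/2 with hm_def
  have hm : 0 ≤ m := by positivity
  apply norm_to_P ha hb hbu hm
  set z := b ^ (-(m/2)) * a ^ m * b ^ (-(m/2)) with hz_def
  have hz0 : 0 ≤ z := by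
    have := star_left_conjugate_nonneg (CFC.rpow_nonneg (a := a) (y := m)) (b ^ (-(m/2)))
    rwa [star_rpow] at this
  rcases eq_or_ne ‖z‖ 0 with h0 | h0
  · rw [h0]; norm_num
  -- spectrum chasing
  have hmem : ‖z‖ ∈ spectrum ℝ z := CStarAlgebra.norm_mem_spectrum_of_nonneg hz0
  have hswap1 : spectrum ℝ z \ {0} = spectrum ℝ (a ^ m * b ^ (-m)) \ {0} := by
    have e1 : z = (b ^ (-(m/2))) * (a ^ m * b ^ (-(m/2))) := by
      rw [hz_def, mul_assoc]
    have e2 : (a ^ m * b ^ (-(m/2))) * (b ^ (-(m/2))) = a ^ m * b ^ (-m) := by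
      rw [mul_assoc, ← CFC.rpow_add ((spectrum.zero_notMem_iff ℝ≥0).mp hbu)]
      congr 2
      ring
    rw [e1, spectrum.nonzero_mul_comm, e2]
  have hswap2 : spectrum ℝ (a ^ m * b ^ (-m)) \ {0}
      = spectrum ℝ (b ^ (-(r/2)) * (a ^ m * b ^ (-(s/2)))) \ {0} := by
    have e3 : a ^ m * b ^ (-m) = (a ^ m * b ^ (-(s/2))) * (b ^ (-(r/2))) := by
      rw [mul_assoc, ← CFC.rpow_add ((spectrum.zero_notMem_iff ℝ≥0).mp hbu)]
      congr 2
      ring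
    rw [e3, spectrum.nonzero_mul_comm]
  have hmem2 : ‖z‖ ∈ spectrum ℝ (b ^ (-(r/2)) * (a ^ m * b ^ (-(s/2)))) := by
    have : ‖z‖ ∈ spectrum ℝ z \ {0} := ⟨hmem, by simpa using h0⟩
    rw [hswap1, hswap2] at this
    exact this.1
  have hbound : ‖z‖ ≤ ‖b ^ (-(r/2)) * (a ^ m * b ^ (-(s/2)))‖ := by
    have := spectrum.norm_le_norm_of_mem hmem2
    rwa [Real.norm_of_nonneg (norm_nonneg z)] at this
  have hfact : b ^ (-(r/2)) * (a ^ m * b ^ (-(s/2)))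
      = (b ^ (-(r/2)) * a ^ (r/2)) * (a ^ (s/2) * b ^ (-(s/2))) := by
    have : a ^ (r/2) * a ^ (s/2) = a ^ m := by
      rw [← rpow_add_nonneg a ha (by positivity) (by positivity)]
      congr 1
      ring
    simp only [mul_assoc, ← this]
  have hNr : ‖b ^ (-(r/2)) * a ^ (r/2)‖ ≤ 1 := by
    have h := P_to_norm ha hb hbu hr hPr
    rw [← norm_star, star_mul, star_rpow, star_rpow] at h
    exact h
  have hNs : ‖a ^ (s/2) * b ^ (-(s/2))‖ ≤ 1 := P_to_norm ha hb hbu hs hPs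
  calc ‖z‖ ≤ ‖b ^ (-(r/2)) * (a ^ m * b ^ (-(s/2)))‖ := hbound
  _ = ‖(b ^ (-(r/2)) * a ^ (r/2)) * (a ^ (s/2) * b ^ (-(s/2)))‖ := by rw [hfact]
  _ ≤ ‖b ^ (-(r/2)) * a ^ (r/2)‖ * ‖a ^ (s/2) * b ^ (-(s/2))‖ := norm_mul_le _ _
  _ ≤ 1 * 1 := by
      exact mul_le_mul hNr hNs (norm_nonneg _) zero_le_one
  _ = 1 := by norm_num

lemma dyadic (ha : 0 ≤ a) (hb : 0 ≤ b) (hbu : 0 ∉ spectrum ℝ≥0 b) (hab : a ≤ b) :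
    ∀ n : ℕ, ∀ k : ℕ, k ≤ 2 ^ n → a ^ ((k : ℝ) / 2 ^ n) ≤ b ^ ((k : ℝ) / 2 ^ n) := by
  intro n
  induction n with
  | zero =>
    intro k hk
    interval_cases k
    · simpa [CFC.rpow_zero a ha, CFC.rpow_zero b hb] using le_refl (1 : A)
    · simpa [CFC.rpow_one a ha, CFC.rpow_one b hb] using hab
  | succ n ih =>
    intro k hk
    rcases Nat.even_or_odd k with ⟨j, hj⟩ | ⟨j, hj⟩
    · subst hj
      have hj2 : j ≤ 2 ^ n := by
        rw [pow_succ] at hk; omega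
      have : ((j + j : ℕ) : ℝ) / 2 ^ (n + 1) = (j : ℝ) / 2 ^ n := by
        push_cast
        ring
      rw [this]
      exact ih j hj2
    · subst hj
      have hj2 : j + 1 ≤ 2 ^ n := by
        rw [pow_succ] at hk; omega
      have hj1 : j ≤ 2 ^ n := by omega
      have key := midpoint ha hb hbu (by positivity : (0:ℝ) ≤ (j : ℝ) / 2 ^ n)
        (by positivity : (0:ℝ) ≤ ((j + 1 : ℕ) : ℝ) / 2 ^ n) (ih j hj1) (ih (j+1) hj2)
      have : (((2 * j + 1 : ℕ)) : ℝ) / 2 ^ (n + 1)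
          = ((j : ℝ) / 2 ^ n + ((j + 1 : ℕ) : ℝ) / 2 ^ n) / 2 := by
        push_cast
        ring
      rw [this]
      exact key

end Invertible

section Approx

variable {A : Type*} [CStarAlgebra A] [PartialOrder A] [StarOrderedRing A] [Nontrivial A]
variable {a b : A}

lemma rpow_eq_cfc_real (c : A) (hc : 0 ≤ c) {r : ℝ} (hr : 0 < r) :
    c ^ r = cfc (fun x : ℝ => x ^ r) c := by
  exact CFC.rpow_eq_cfc_real hc

lemma continuousOn_rpow_real {r : ℝ} (hr : 0 ≤ r) (s : Set ℝ) :
    ContinuousOn (fun x : ℝ => x ^ r) s := fun x _ =>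
  (Real.continuousAt_rpow_const x r (Or.inr hr)).continuousWithinAt

lemma exists_dyadic {q θ : ℝ} (hq0 : 0 < q) (hq1 : q ≤ 1) (hθ : 0 < θ) :
    ∃ n k : ℕ, k ≤ 2 ^ n ∧ 0 < (k : ℝ) / 2 ^ n ∧ (k : ℝ) / 2 ^ n ≤ q ∧
      q - (k : ℝ) / 2 ^ n < θ := by
  obtain ⟨n, hn⟩ := exists_pow_lt_of_lt_one (lt_min hθ hq0) (by norm_num : (1:ℝ)/2 < 1)
  have h2n : (0:ℝ) < 2 ^ n := by positivity
  rw [div_pow, one_pow] at hn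
  have hnθ : 1 / (2:ℝ) ^ n < θ := lt_of_lt_of_le hn (min_le_left _ _)
  have hnq : 1 / (2:ℝ) ^ n < q := lt_of_lt_of_le hn (min_le_right _ _)
  set k := ⌊2 ^ n * q⌋₊ with hk_def
  have hfl : (k : ℝ) ≤ 2 ^ n * q := Nat.floor_le (by positivity)
  have hfl2 : 2 ^ n * q < (k : ℝ) + 1 := Nat.lt_floor_add_one _
  have hk1 : (1:ℝ) ≤ (k : ℝ) := by
    have h1 : (1:ℝ) ≤ 2 ^ n * q := by
      rw [div_lt_iff₀ h2n] at hnq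
      linarith [hnq]
    have : (1:ℕ) ≤ k := Nat.le_floor (by exact_mod_cast h1)
    exact_mod_cast this
  refine ⟨n, k, ?_, ?_, ?_, ?_⟩
  · have h : (k : ℝ) ≤ ((2 ^ n : ℕ) : ℝ) := by push_cast; nlinarith
    exact_mod_cast h
  · positivity
  · rw [div_le_iff₀ h2n]; nlinarith
  · have h1 : q - θ < (k : ℝ) / 2 ^ n := by
      rw [lt_div_iff₀ h2n]
      rw [div_lt_iff₀ h2n] at hnθ
      nlinarith
    linarith

lemma unif_rpow {q R ε : ℝ} (hq0 : 0 < q) (hq1 : q ≤ 1) (hR : 1 ≤ R) (hε : 0 < ε) :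
    ∃ θ > 0, ∀ d : ℝ, 0 < d → q - θ ≤ d → d ≤ q →
      ∀ x : ℝ, 0 ≤ x → x ≤ R → |x ^ d - x ^ q| ≤ ε := by
  set K : Set (ℝ × ℝ) := Set.Icc 0 R ×ˢ Set.Icc (q/2) 1 with hK_def
  have hK : IsCompact K := isCompact_Icc.prod isCompact_Icc
  have hF : ContinuousOn (fun p : ℝ × ℝ => p.1 ^ p.2) K := by
    intro p hp
    exact (Real.continuousAt_rpow p (Or.inr (lt_of_lt_of_le (by positivity) hp.2.1))).continuousWithinAt
  have huc := hK.uniformContinuousOn_of_continuous hF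
  rw [Metric.uniformContinuousOn_iff] at huc
  obtain ⟨δ, hδ, hucδ⟩ := huc ε hε
  refine ⟨min (δ/2) (q/2), by positivity, ?_⟩
  intro d hd hd1 hd2 x hx0 hxR
  have hdq2 : q/2 ≤ d := by
    have := min_le_right (δ/2) (q/2)
    linarith
  have hxK : (x, d) ∈ K := ⟨⟨hx0, hxR⟩, ⟨hdq2, hd2.trans hq1⟩⟩
  have hqK : (x, q) ∈ K := ⟨⟨hx0, hxR⟩, ⟨by linarith, hq1⟩⟩
  have hdist : dist (x, d) (x, q) < δ := by
    rw [Prod.dist_eq]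
    simp only [dist_self]
    have : dist d q = |d - q| := Real.dist_eq d q
    rw [this, abs_of_nonpos (by linarith)]
    have := min_le_left (δ/2) (q/2)
    apply max_lt (by linarith) (by linarith)
  have := hucδ _ hxK _ hqK hdist
  rw [Real.dist_eq] at this
  exact this.le

lemma le_add_smul_one {x y : A} (hx : IsSelfAdjoint x) (hy : IsSelfAdjoint y)
    {ε : ℝ} (h : ‖x - y‖ ≤ ε) : x ≤ y + ε • 1 := by
  have h1 : x - y ≤ algebraMap ℝ A ‖x - y‖ := IsSelfAdjoint.le_algebraMap_norm_self (hx.sub hy)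
  have h2 : algebraMap ℝ A ‖x - y‖ ≤ ε • 1 := by
    rw [Algebra.algebraMap_eq_smul_one, ← sub_nonneg, ← sub_smul]
    exact smul_nonneg (by linarith) one_nonneg'
  calc x = y + (x - y) := by abel
  _ ≤ y + ε • 1 := add_le_add_right (h1.trans h2) y

lemma rpow_norm_diff {c : A} (hc : 0 ≤ c) {d q ε : ℝ} (hd : 0 < d) (hq : 0 < q) (hε : 0 ≤ ε)
    (hsc : ∀ x : ℝ, 0 ≤ x → x ≤ ‖c‖ → |x ^ d - x ^ q| ≤ ε) :
    ‖c ^ d - c ^ q‖ ≤ ε := by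
  rw [rpow_eq_cfc_real c hc hd, rpow_eq_cfc_real c hc hq,
    ← cfc_sub _ _ c (continuousOn_rpow_real hd.le _) (continuousOn_rpow_real hq.le _)]
  rw [norm_cfc_le_iff (fun x : ℝ => x ^ d - x ^ q) _ hε ((continuousOn_rpow_real hd.le _).sub (continuousOn_rpow_real hq.le _))
    (IsSelfAdjoint.of_nonneg hc)]
  intro x hx
  have hx0 : 0 ≤ x := spectrum_nonneg_of_nonneg hc hx
  have hxR : x ≤ ‖c‖ := by
    have := spectrum.norm_le_norm_of_mem hx
    rwa [Real.norm_of_nonneg hx0] at this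
  rw [Real.norm_eq_abs]
  exact hsc x hx0 hxR

lemma LH_inv {a b : A} (ha : 0 ≤ a) (hb : 0 ≤ b) (hbu : 0 ∉ spectrum ℝ≥0 b) (hab : a ≤ b)
    {q : ℝ} (hq0 : 0 < q) (hq1 : q ≤ 1) : a ^ q ≤ b ^ q := by
  have key : ∀ ε : ℝ, 0 < ε → a ^ q ≤ b ^ q + ε • 1 := by
    intro ε hε
    set R : ℝ := max 1 (max ‖a‖ ‖b‖) with hR_def
    have hR1 : 1 ≤ R := le_max_left _ _
    obtain ⟨θ, hθ0, hθ⟩ := unif_rpow hq0 hq1 hR1 (by linarith : (0:ℝ) < ε/2)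
    obtain ⟨n, k, hk, hd0, hdq, hdθ⟩ := exists_dyadic hq0 hq1 hθ0
    set d : ℝ := (k : ℝ) / 2 ^ n with hd_def
    have hPd : a ^ d ≤ b ^ d := dyadic ha hb hbu hab n k hk
    have hna : ‖a ^ q - a ^ d‖ ≤ ε/2 := by
      rw [← norm_neg, neg_sub]
      apply rpow_norm_diff ha hd0 hq0 (by linarith)
      intro x hx0 hxR
      exact hθ d hd0 (by linarith) hdq x hx0
        (hxR.trans ((le_max_left _ _).trans (le_max_right _ _)))
    have hnb : ‖b ^ d - b ^ q‖ ≤ ε/2 := by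
      apply rpow_norm_diff hb hd0 hq0 (by linarith)
      intro x hx0 hxR
      exact hθ d hd0 (by linarith) hdq x hx0
        (hxR.trans ((le_max_right _ _).trans (le_max_right _ _)))
    calc a ^ q ≤ a ^ d + (ε/2) • 1 := le_add_smul_one (rpow_sa a q) (rpow_sa a d) hna
    _ ≤ b ^ d + (ε/2) • 1 := add_le_add_left hPd _
    _ ≤ (b ^ q + (ε/2) • 1) + (ε/2) • 1 :=
        add_le_add_left (le_add_smul_one (rpow_sa b d) (rpow_sa b q) hnb) _
    _ = b ^ q + ε • 1 := by rw [add_assoc, ← add_smul]; norm_num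
  have htend : Filter.Tendsto (fun ε : ℝ => b ^ q + ε • (1:A)) (nhdsWithin 0 (Set.Ioi 0))
      (nhds (b ^ q)) := by
    have hcont : Continuous (fun ε : ℝ => b ^ q + ε • (1:A)) :=
      continuous_const.add (continuous_id.smul continuous_const)
    have := hcont.continuousAt (x := (0:ℝ)).tendsto
    simp only [zero_smul, add_zero] at this
    exact this.mono_left nhdsWithin_le_nhds
  refine ge_of_tendsto htend ?_
  filter_upwards [self_mem_nhdsWithin] with ε hε
  exact key ε hε

lemma loewner_heinz {a b : A} (ha : 0 ≤ a) (hab : a ≤ b) {q : ℝ} (hq0 : 0 < q) (hq1 : q ≤ 1) :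
    a ^ q ≤ b ^ q := by
  have hb : 0 ≤ b := ha.trans hab
  have key : ∀ ε : ℝ, 0 < ε → a ^ q ≤ b ^ q + (ε ^ q) • 1 := by
    intro ε hε
    set c : A := b + algebraMap ℝ A ε with hc_def
    have halg : (0:A) ≤ algebraMap ℝ A ε := by
      rw [Algebra.algebraMap_eq_smul_one]
      exact smul_nonneg hε.le one_nonneg'
    have hc : 0 ≤ c := add_nonneg hb halg
    have hac : a ≤ c := hab.trans (le_add_of_nonneg_right halg)
    have hcu : 0 ∉ spectrum ℝ≥0 c := by
      rw [spectrum.zero_notMem_iff, ← spectrum.zero_notMem_iff ℝ]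
      have hcomm : c = algebraMap ℝ A ε + b := by rw [hc_def, add_comm]
      rw [hcomm, ← spectrum.singleton_add_eq]
      rintro ⟨x, hx, y, hy, hxy⟩
      rw [Set.mem_singleton_iff] at hx
      have hy0 : 0 ≤ y := spectrum_nonneg_of_nonneg hb hy
      subst hx
      simp only at hxy
      linarith [hxy]
    have h1 : a ^ q ≤ c ^ q := LH_inv ha hc hcu hac hq0 hq1
    have h2 : c ^ q ≤ b ^ q + (ε ^ q) • 1 := by
      have hb_sa : IsSelfAdjoint b := .of_nonneg hb
      have hce : c = cfc (fun x : ℝ => x + ε) b := by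
        rw [cfc_add (a := b) _ _ (by fun_prop) (by fun_prop), cfc_id' ℝ b, cfc_const ε b,
          Algebra.algebraMap_eq_smul_one, hc_def, Algebra.algebraMap_eq_smul_one]
      have hcq : c ^ q = cfc (fun x : ℝ => (x + ε) ^ q) b := by
        rw [rpow_eq_cfc_real c hc hq0, hce, ← cfc_comp _ _ b hb_sa ?_ (by fun_prop)]
        · rfl
        · intro x hx
          rcases hx with ⟨y, hy, rfl⟩
          exact (Real.continuousAt_rpow_const _ _ (Or.inr hq0.le)).continuousWithinAt
      rw [hcq, rpow_eq_cfc_real b hb hq0]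
      have step : cfc (fun x : ℝ => (x + ε) ^ q) b ≤ cfc (fun x : ℝ => x ^ q + ε ^ q) b := by
        apply cfc_mono
        · intro x hx
          have hx0 : 0 ≤ x := spectrum_nonneg_of_nonneg hb hx
          have := NNReal.rpow_add_le_add_rpow (Real.toNNReal x) (Real.toNNReal ε) hq0.le hq1
          have hcoe : ((Real.toNNReal x + Real.toNNReal ε : ℝ≥0) : ℝ) = x + ε := by
            push_cast
            rw [Real.coe_toNNReal x hx0, Real.coe_toNNReal ε hε.le]
          calc (x + ε) ^ q = (((Real.toNNReal x + Real.toNNReal ε : ℝ≥0) : ℝ)) ^ q := by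
                rw [hcoe]
          _ = (((Real.toNNReal x + Real.toNNReal ε) ^ q : ℝ≥0) : ℝ) := by
                rw [← NNReal.coe_rpow]
          _ ≤ ((Real.toNNReal x ^ q + Real.toNNReal ε ^ q : ℝ≥0) : ℝ) := by
                exact_mod_cast this
          _ = x ^ q + ε ^ q := by
                push_cast
                rw [← NNReal.coe_rpow, ← NNReal.coe_rpow, NNReal.coe_rpow, NNReal.coe_rpow,
                  Real.coe_toNNReal x hx0, Real.coe_toNNReal ε hε.le]
        · intro x hx
          rcases Set.mem_image_of_mem _ hx with _
          exact ((Real.continuousAt_rpow_const _ _ (Or.inr hq0.le)).comp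
            (by fun_prop : ContinuousAt (fun x : ℝ => x + ε) x)).continuousWithinAt
        · exact (continuousOn_rpow_real hq0.le _).add continuousOn_const
      calc cfc (fun x : ℝ => (x + ε) ^ q) b ≤ cfc (fun x : ℝ => x ^ q + ε ^ q) b := step
      _ = cfc (fun x : ℝ => x ^ q) b + (ε ^ q) • 1 := by
          rw [cfc_add (a := b) _ _ (continuousOn_rpow_real hq0.le _) continuousOn_const,
            cfc_const _ b, Algebra.algebraMap_eq_smul_one]
    exact h1.trans h2
  have htend : Filter.Tendsto (fun ε : ℝ => b ^ q + (ε ^ q) • (1:A)) (nhdsWithin 0 (Set.Ioi 0))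
      (nhds (b ^ q)) := by
    have hc1 : ContinuousAt (fun ε : ℝ => ε ^ q) 0 :=
      Real.continuousAt_rpow_const 0 q (Or.inr hq0.le)
    have hc : ContinuousAt (fun ε : ℝ => b ^ q + (ε ^ q) • (1:A)) 0 :=
      (continuousAt_const.add (hc1.smul continuousAt_const))
    have := hc.tendsto
    rw [Real.zero_rpow hq0.ne'] at this
    simp only [zero_smul, add_zero] at this
    exact this.mono_left nhdsWithin_le_nhds
  refine ge_of_tendsto htend ?_
  filter_upwards [self_mem_nhdsWithin] with ε hε
  exact key ε hε

end Approx

section Main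

variable {A : Type*} [CStarAlgebra A] [PartialOrder A] [StarOrderedRing A] [Nontrivial A]

lemma contOn_Msub {M v : ℝ} (hv : 0 ≤ v) (s : Set ℝ) :
    ContinuousOn (fun x : ℝ => (M - x) ^ v) s := fun x _ =>
  ((Real.continuousAt_rpow_const (M - x) v (Or.inr hv)).comp
    (by fun_prop : ContinuousAt (fun x : ℝ => M - x) x)).continuousWithinAt

lemma term_eq_cfc (c : A) (hc : 0 ≤ c) {M u v : ℝ} (hu : 0 < u) (hv : 0 < v)
    (h0M : 0 ≤ algebraMap ℝ A M - c) :
    c ^ u * (algebraMap ℝ A M - c) ^ v * c ^ u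
      = cfc (fun x : ℝ => x ^ u * ((M - x) ^ v * x ^ u)) c := by
  have hc_sa : IsSelfAdjoint c := .of_nonneg hc
  have h2 : algebraMap ℝ A M - c = cfc (fun x : ℝ => M - x) c := by
    rw [cfc_sub _ _ c (by fun_prop) (by fun_prop), cfc_const M c, cfc_id' ℝ c]
  have h3 : (algebraMap ℝ A M - c) ^ v = cfc (fun x : ℝ => (M - x) ^ v) c := by
    rw [rpow_eq_cfc_real _ h0M hv, h2, ← cfc_comp _ _ c hc_sa
      (continuousOn_rpow_real hv.le _) (by fun_prop)]
    exact cfc_congr fun x _ => rfl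
  rw [h3, rpow_eq_cfc_real c hc hu, mul_assoc,
    ← cfc_mul _ _ c (contOn_Msub hv.le _) (continuousOn_rpow_real hu.le _),
    ← cfc_mul (fun x : ℝ => x ^ u) (fun x : ℝ => (M - x) ^ v * x ^ u) c (continuousOn_rpow_real hu.le _)
      ((contOn_Msub hv.le _).mul (continuousOn_rpow_real hu.le _))]

lemma term_bound (c : A) (hc : 0 ≤ c) {M u v α β : ℝ} (hu : 0 < u) (hv : 0 < v)
    (hcM : ‖c‖ ≤ M) (h0M : 0 ≤ algebraMap ℝ A M - c)
    (hg : ∀ x : ℝ, 0 ≤ x → x ≤ M → x ^ u * ((M - x) ^ v * x ^ u) ≤ α * x + β) :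
    c ^ u * (algebraMap ℝ A M - c) ^ v * c ^ u ≤ α • c + β • 1 := by
  rw [term_eq_cfc c hc hu hv h0M]
  have hcont : ContinuousOn (fun x : ℝ => x ^ u * ((M - x) ^ v * x ^ u)) (spectrum ℝ c) :=
    (continuousOn_rpow_real hu.le _).mul
      ((contOn_Msub hv.le _).mul (continuousOn_rpow_real hu.le _))
  calc cfc (fun x : ℝ => x ^ u * ((M - x) ^ v * x ^ u)) c
      ≤ cfc (fun x : ℝ => α * x + β) c := by
        apply cfc_mono ?_ hcont (by fun_prop)
        intro x hx
        have hx0 : 0 ≤ x := spectrum_nonneg_of_nonneg hc hx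
        have hxM : x ≤ M := by
          have := spectrum.norm_le_norm_of_mem hx
          rw [Real.norm_of_nonneg hx0] at this
          linarith
        exact hg x hx0 hxM
  _ = α • c + β • 1 := by
      rw [cfc_add (a := c) _ _ (by fun_prop) (by fun_prop), cfc_const_mul_id α c,
        cfc_const β c, Algebra.algebraMap_eq_smul_one]

lemma scalar_combine {t x M : ℝ} (ht2 : t < 1) (hx0 : 0 ≤ x) :
    x ^ (1 - t) * ((M - x) ^ (2*t - 1) * x ^ (1 - t))
      = x ^ (2 - 2*t) * (M - x) ^ (2*t - 1) := by
  have hne : ((1:ℝ)-t) + (1-t) ≠ 0 := ne_of_gt (by linarith)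
  have h : x ^ (2 - 2*t) = x ^ (1-t) * x ^ (1-t) := by
    rw [← Real.rpow_add' hx0 hne]
    congr 1
    ring
  rw [h]
  ring

lemma scalar_case1 {p M x : ℝ} (hp0 : 0 ≤ p) (hp1 : p ≤ 1) (hx0 : 0 ≤ x) (hxM : x ≤ M) :
    x ^ p * (M - x) ^ (1 - p) ≤ p * x + (1 - p) * (M - x) :=
  Real.geom_mean_le_arith_mean2_weighted hp0 (by linarith) hx0 (by linarith) (by ring)

lemma scalar_case2 {p M x : ℝ} (hp0 : 0 < p) (hp1 : p < 1) (hx0 : 0 ≤ x) (hxM : x ≤ M) :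
    x ^ p * (M - x) ^ (1 - p) ≤ (p ^ p * (1 - p) ^ (1 - p)) * M := by
  have h1p : 0 < 1 - p := by linarith
  have hMx : 0 ≤ M - x := by linarith
  have hAM := Real.geom_mean_le_arith_mean2_weighted hp0.le h1p.le
    (by positivity : (0:ℝ) ≤ x/p) (by positivity : (0:ℝ) ≤ (M-x)/(1-p)) (by ring)
  have hsum : p * (x/p) + (1-p) * ((M-x)/(1-p)) = M := by field_simp; ring
  have hppos := Real.rpow_pos_of_pos hp0 p
  have hqpos := Real.rpow_pos_of_pos h1p (1-p)
  have hprod : x ^ p * (M-x) ^ (1-p)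
      = (p ^ p * (1-p) ^ (1-p)) * ((x/p) ^ p * ((M-x)/(1-p)) ^ (1-p)) := by
    rw [Real.div_rpow hx0 hp0.le, Real.div_rpow hMx h1p.le]
    field_simp
  rw [hprod]
  calc (p ^ p * (1-p) ^ (1-p)) * ((x/p) ^ p * ((M-x)/(1-p)) ^ (1-p))
      ≤ (p ^ p * (1-p) ^ (1-p)) * M :=
        mul_le_mul_of_nonneg_left (hAM.trans_eq hsum) (by positivity)

lemma entropy_aux {p : ℝ} (hp0 : 0 < p) (hp2 : p ≤ 1/2) :
    2 * (p ^ p * (1-p) ^ (1-p)) ≤ 2 ^ (1 - 2*p) := by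
  have h1p : 0 < 1 - p := by linarith
  set u : ℝ := (1-p)/p with hu_def
  have hu0 : 0 < u := by positivity
  have hu1 : 1 ≤ u := by rw [hu_def, le_div_iff₀ hp0]; linarith
  have hB := one_add_mul_self_le_rpow_one_add
    ((by norm_num : (-1:ℝ) ≤ 0).trans (by positivity : (0:ℝ) ≤ 1/u)) hu1
  rw [mul_one_div, div_self hu0.ne'] at hB
  have h2 : (2:ℝ) ≤ (1 + 1/u) ^ u := by linarith
  have hbase : 1 + 1/u = (1-p)⁻¹ := by
    rw [hu_def]
    field_simp
    ring
  have h4p : 4 * p ≤ ((1-p)⁻¹) ^ u := by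
    have h42 : 4 * p ≤ 2 := by linarith
    rw [← hbase]
    linarith
  have h5 : (4*p) ^ p ≤ (((1-p)⁻¹) ^ u) ^ p :=
    Real.rpow_le_rpow (by positivity) h4p hp0.le
  have hup : u * p = 1 - p := by
    rw [hu_def]; field_simp
  have h6 : (((1-p)⁻¹) ^ u) ^ p = (1-p) ^ (p - 1) := by
    rw [Real.inv_rpow h1p.le, ← Real.rpow_neg h1p.le, ← Real.rpow_mul h1p.le]
    congr 1
    linarith [hup]
  have h7 : (4*p) ^ p * (1-p) ^ (1-p) ≤ 1 := by
    have := mul_le_mul_of_nonneg_right (h5.trans_eq h6) (Real.rpow_nonneg h1p.le (1-p))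
    rwa [← Real.rpow_add h1p, show p - 1 + (1-p) = 0 by ring, Real.rpow_zero] at this
  have h9 : (4*p) ^ p = 4 ^ p * p ^ p := Real.mul_rpow (by norm_num) hp0.le
  have h4eq : (4:ℝ) ^ p = 2 ^ (2*p) := by
    rw [show (4:ℝ) = 2 ^ (2:ℕ) by norm_num, ← Real.rpow_natCast (2:ℝ) 2,
      ← Real.rpow_mul (by norm_num)]
    norm_num
  have h10 : (2:ℝ) ^ (1-2*p) * 2 ^ (2*p) = 2 := by
    rw [← Real.rpow_add (by norm_num)]
    norm_num
  calc 2 * (p ^ p * (1-p) ^ (1-p)) = 2 ^ (1-2*p) * (2 ^ (2*p) * (p ^ p * (1-p) ^ (1-p))) := by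
        linear_combination (-(p ^ p * (1-p) ^ (1-p))) * h10
  _ = 2 ^ (1-2*p) * ((4*p) ^ p * (1-p) ^ (1-p)) := by rw [h9, h4eq]; ring
  _ ≤ 2 ^ (1-2*p) * 1 := mul_le_mul_of_nonneg_left h7 (by positivity)
  _ = 2 ^ (1-2*p) := mul_one _

end Main

end AuxFT


open AuxFT in


/-- **Interpolation estimate for the auxiliary expression `f_t`
(operator-norm case).** For positive elements `a, b` of a unital C*-algebra and
`t ∈ (1/2, 1)`,
`‖b^(1-t) a^(2t-1) b^(1-t) + a^(1-t) b^(2t-1) a^(1-t)‖ ≤ 2^(max (4t-3) 0) * ‖a + b‖`,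
with real powers via the continuous functional calculus. -/
theorem aux_ft_bound_cstar {A : Type*} [CStarAlgebra A]
    [PartialOrder A] [StarOrderedRing A]
    (a b : A) (ha : 0 ≤ a) (hb : 0 ≤ b) (t : ℝ)
    (ht : t ∈ Set.Ioo (1 / 2 : ℝ) 1) :
    ‖CFC.rpow b (1 - t) * CFC.rpow a (2 * t - 1) * CFC.rpow b (1 - t) +
        CFC.rpow a (1 - t) * CFC.rpow b (2 * t - 1) * CFC.rpow a (1 - t)‖ ≤
      (2 : ℝ) ^ max (4 * t - 3) (0 : ℝ) * ‖a + b‖ := by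
  obtain ⟨ht1, ht2⟩ := ht
  rcases subsingleton_or_nontrivial A with hS | hN
  · have h0 : (CFC.rpow b (1 - t) * CFC.rpow a (2 * t - 1) * CFC.rpow b (1 - t) +
        CFC.rpow a (1 - t) * CFC.rpow b (2 * t - 1) * CFC.rpow a (1 - t)) = 0 :=
      Subsingleton.elim _ _
    rw [h0, norm_zero]
    have : (0:ℝ) < 2 ^ max (4 * t - 3) (0:ℝ) := Real.rpow_pos_of_pos (by norm_num) _
    positivity
  simp only [CFC.rpow_eq_pow]
  have hu : (0:ℝ) < 1 - t := by linarith
  have hv : (0:ℝ) < 2 * t - 1 := by linarith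
  set M : ℝ := ‖a + b‖ with hM_def
  have hM0 : (0:ℝ) ≤ M := norm_nonneg _
  have hM : a + b ≤ algebraMap ℝ A M :=
    IsSelfAdjoint.le_algebraMap_norm_self (.of_nonneg (add_nonneg ha hb))
  have haM : ‖a‖ ≤ M := CStarAlgebra.norm_le_norm_of_nonneg_of_le ha (le_add_of_nonneg_right hb)
  have hbM : ‖b‖ ≤ M := CStarAlgebra.norm_le_norm_of_nonneg_of_le hb (le_add_of_nonneg_left ha)
  have ha' : a ≤ algebraMap ℝ A M - b := by rw [le_sub_iff_add_le]; exact hM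
  have hb' : b ≤ algebraMap ℝ A M - a := by rw [le_sub_iff_add_le']; exact hM
  have h0Mb : 0 ≤ algebraMap ℝ A M - b := ha.trans ha'
  have h0Ma : 0 ≤ algebraMap ℝ A M - a := hb.trans hb'
  have hLa : a ^ (2*t-1) ≤ (algebraMap ℝ A M - b) ^ (2*t-1) :=
    loewner_heinz ha ha' hv (by linarith)
  have hLb : b ^ (2*t-1) ≤ (algebraMap ℝ A M - a) ^ (2*t-1) :=
    loewner_heinz hb hb' hv (by linarith)
  have hconjb : b ^ (1-t) * (a ^ (2*t-1)) * b ^ (1-t)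
      ≤ b ^ (1-t) * (algebraMap ℝ A M - b) ^ (2*t-1) * b ^ (1-t) := by
    have := star_left_conjugate_le_conjugate hLa (b ^ (1-t))
    rwa [star_rpow] at this
  have hconja : a ^ (1-t) * (b ^ (2*t-1)) * a ^ (1-t)
      ≤ a ^ (1-t) * (algebraMap ℝ A M - a) ^ (2*t-1) * a ^ (1-t) := by
    have := star_left_conjugate_le_conjugate hLb (a ^ (1-t))
    rwa [star_rpow] at this
  have hpos : 0 ≤ b ^ (1-t) * a ^ (2*t-1) * b ^ (1-t) + a ^ (1-t) * b ^ (2*t-1) * a ^ (1-t) := by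
    apply add_nonneg
    · have := star_left_conjugate_nonneg (CFC.rpow_nonneg (a := a) (y := 2*t-1)) (b ^ (1-t))
      rwa [star_rpow] at this
    · have := star_left_conjugate_nonneg (CFC.rpow_nonneg (a := b) (y := 2*t-1)) (a ^ (1-t))
      rwa [star_rpow] at this
  have smul_mono : ∀ (c : ℝ) (x y : A), 0 ≤ c → x ≤ y → c • x ≤ c • y := by
    intro c x y hc hxy
    have := smul_nonneg hc (sub_nonneg.mpr hxy)
    rwa [smul_sub, sub_nonneg] at this
  by_cases hcase : t ≤ 3/4
  · -- constant is 1
    have hmax : max (4*t-3) (0:ℝ) = 0 := max_eq_right (by linarith)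
    rw [hmax, Real.rpow_zero, one_mul]
    have hgb : b ^ (1-t) * (algebraMap ℝ A M - b) ^ (2*t-1) * b ^ (1-t)
        ≤ (3 - 4*t) • b + ((2*t-1) * M) • 1 := by
      apply term_bound b hb hu hv hbM h0Mb
      intro x hx0 hxM
      rw [scalar_combine ht2 hx0]
      have h := scalar_case1 (p := 2-2*t) (M := M) (x := x) (by linarith) (by linarith) hx0 hxM
      rw [show (1:ℝ)-(2-2*t) = 2*t-1 by ring] at h
      calc x ^ (2-2*t) * (M - x) ^ (2*t-1) ≤ (2-2*t) * x + (2*t-1) * (M - x) := h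
      _ = (3 - 4*t) * x + (2*t-1) * M := by ring
    have hga : a ^ (1-t) * (algebraMap ℝ A M - a) ^ (2*t-1) * a ^ (1-t)
        ≤ (3 - 4*t) • a + ((2*t-1) * M) • 1 := by
      apply term_bound a ha hu hv haM h0Ma
      intro x hx0 hxM
      rw [scalar_combine ht2 hx0]
      have h := scalar_case1 (p := 2-2*t) (M := M) (x := x) (by linarith) (by linarith) hx0 hxM
      rw [show (1:ℝ)-(2-2*t) = 2*t-1 by ring] at h
      calc x ^ (2-2*t) * (M - x) ^ (2*t-1) ≤ (2-2*t) * x + (2*t-1) * (M - x) := h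
      _ = (3 - 4*t) * x + (2*t-1) * M := by ring
    have hsum : b ^ (1-t) * a ^ (2*t-1) * b ^ (1-t) + a ^ (1-t) * b ^ (2*t-1) * a ^ (1-t)
        ≤ M • 1 := by
      calc b ^ (1-t) * a ^ (2*t-1) * b ^ (1-t) + a ^ (1-t) * b ^ (2*t-1) * a ^ (1-t)
          ≤ ((3 - 4*t) • b + ((2*t-1) * M) • 1) + ((3 - 4*t) • a + ((2*t-1) * M) • 1) :=
            add_le_add (hconjb.trans hgb) (hconja.trans hga)
      _ = (3 - 4*t) • (a + b) + (2*((2*t-1) * M)) • 1 := by module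
      _ ≤ ((3 - 4*t) * M) • 1 + (2*((2*t-1) * M)) • 1 := by
          apply add_le_add_left
          have h1 := smul_mono (3 - 4*t) (a + b) (algebraMap ℝ A M) (by linarith) hM
          rwa [Algebra.algebraMap_eq_smul_one, smul_smul] at h1
      _ = M • 1 := by
          rw [← add_smul]
          congr 1
          ring
    calc ‖b ^ (1-t) * a ^ (2*t-1) * b ^ (1-t) + a ^ (1-t) * b ^ (2*t-1) * a ^ (1-t)‖
        ≤ ‖M • (1:A)‖ := CStarAlgebra.norm_le_norm_of_nonneg_of_le hpos hsum
    _ = M := by rw [norm_smul, Real.norm_eq_abs, abs_of_nonneg hM0, norm_one, mul_one]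
  · -- constant is 2 ^ (4t-3)
    have ht34 : 3/4 < t := not_le.mp hcase
    have hmax : max (4*t-3) (0:ℝ) = 4*t-3 := max_eq_left (by linarith)
    rw [hmax]
    set K : ℝ := (2-2*t) ^ (2-2*t) * (2*t-1) ^ (2*t-1) with hK_def
    have hK0 : 0 ≤ K := by
      apply mul_nonneg (Real.rpow_nonneg (by linarith) _) (Real.rpow_nonneg (by linarith) _)
    have hterm : ∀ x : ℝ, 0 ≤ x → x ≤ M →
        x ^ (1-t) * ((M - x) ^ (2*t-1) * x ^ (1-t)) ≤ 0 * x + K * M := by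
      intro x hx0 hxM
      rw [scalar_combine ht2 hx0]
      have h := scalar_case2 (p := 2-2*t) (M := M) (x := x) (by linarith) (by linarith) hx0 hxM
      rw [show (1:ℝ)-(2-2*t) = 2*t-1 by ring] at h
      calc x ^ (2-2*t) * (M - x) ^ (2*t-1) ≤ ((2-2*t) ^ (2-2*t) * (2*t-1) ^ (2*t-1)) * M := h
      _ = 0 * x + K * M := by rw [hK_def]; ring
    have hgb := term_bound b hb hu hv hbM h0Mb hterm
    have hga := term_bound a ha hu hv haM h0Ma hterm
    rw [zero_smul, zero_add] at hgb hga
    have hsum : b ^ (1-t) * a ^ (2*t-1) * b ^ (1-t) + a ^ (1-t) * b ^ (2*t-1) * a ^ (1-t)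
        ≤ (2*(K*M)) • 1 := by
      calc b ^ (1-t) * a ^ (2*t-1) * b ^ (1-t) + a ^ (1-t) * b ^ (2*t-1) * a ^ (1-t)
          ≤ (K*M) • (1:A) + (K*M) • 1 := add_le_add (hconjb.trans hgb) (hconja.trans hga)
      _ = (2*(K*M)) • 1 := by module
    have hent := entropy_aux (p := 2-2*t) (by linarith) (by linarith)
    rw [show (1:ℝ)-(2-2*t) = 2*t-1 by ring, show (1:ℝ)-2*(2-2*t) = 4*t-3 by ring] at hent
    calc ‖b ^ (1-t) * a ^ (2*t-1) * b ^ (1-t) + a ^ (1-t) * b ^ (2*t-1) * a ^ (1-t)‖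
        ≤ ‖(2*(K*M)) • (1:A)‖ := CStarAlgebra.norm_le_norm_of_nonneg_of_le hpos hsum
    _ = 2*(K*M) := by
        rw [norm_smul, Real.norm_eq_abs, abs_of_nonneg (by positivity), norm_one, mul_one]
    _ = (2*K)*M := by ring
    _ ≤ (2:ℝ) ^ (4*t-3) * M := by
        apply mul_le_mul_of_nonneg_right _ hM0
        rw [hK_def]
        exact hent
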